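/- arXiv:1803.02006 — 2 statements merged into one kernel-verified Lean document; each statement's English description precedes it below -/
import Mathlib

section
/- Let G be a finite group, let φ_i : 𝒢̃_i → 𝒢_i (i = 1, 2) be two G-covers of graphs, and let τ : G → G be an automorphism. Let 𝒲_{𝒢_i} be the set of simple closed walks on 𝒢_i. If there exists no bijection Θ : 𝒲_{𝒢₁} → 𝒲_{𝒢₂} such that τ(NV_{φ₁}(γ)) = NV_{φ₂}(Θ(γ)) for every γ ∈ 𝒲_{𝒢₁}, then there exists no isomorphism of graphs θ : 𝒢₁ → 𝒢₂ such that 𝒢̃₁ and 𝒢̃₂ are (θ, τ)-equivalent. -/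
/-- A finite graph: each edge `e` has an initial vertex `init e` and a terminal
vertex `term e` (forming its plus direction `e⁺`; the minus direction is reversed). -/
structure FinDirGraph where
  V : Type
  E : Type
  finV : Finite V
  finE : Finite E
  init : E → V
  term : E → V

namespace FinDirGraph

/-- Initial vertex of a directed edge; `true` is the plus direction. -/
def dsrc (Γ : FinDirGraph) (e : Γ.E) (s : Bool) : Γ.V := if s then Γ.init e else Γ.term e

/-- Terminal vertex of a directed edge. -/
def ddst (Γ : FinDirGraph) (e : Γ.E) (s : Bool) : Γ.V := if s then Γ.term e else Γ.init e

/-- `Γ.WalkFrom v ℓ w` : the list of directed edges `ℓ` is a walk from `v` to `w`. -/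
def WalkFrom (Γ : FinDirGraph) : Γ.V → List (Γ.E × Bool) → Γ.V → Prop
  | v, [], w => v = w
  | v, p :: rest, w => Γ.dsrc p.1 p.2 = v ∧ Γ.WalkFrom (Γ.ddst p.1 p.2) rest w

/-- The list of vertices `v₀, …, v_n` visited by a walk with edge list `ℓ` starting at `v`. -/
def vertList (Γ : FinDirGraph) : Γ.V → List (Γ.E × Bool) → List Γ.V
  | v, [] => [v]
  | v, p :: rest => v :: Γ.vertList (Γ.ddst p.1 p.2) rest

end FinDirGraph

/-- A map of graphs: the endpoint set of the image of an edge is the image of its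
endpoint set. -/
structure GraphMap (Γ₁ Γ₂ : FinDirGraph) where
  mapV : Γ₁.V → Γ₂.V
  mapE : Γ₁.E → Γ₂.E
  endpoints : ∀ e : Γ₁.E,
    ({Γ₂.init (mapE e), Γ₂.term (mapE e)} : Set Γ₂.V) = mapV '' {Γ₁.init e, Γ₁.term e}

/-- An isomorphism of graphs. -/
structure GraphIso (Γ₁ Γ₂ : FinDirGraph) extends GraphMap Γ₁ Γ₂ where
  bijV : Function.Bijective mapV
  bijE : Function.Bijective mapE

/-- A `G`-cover of graphs `φ : T → B`: `G` acts on `T` (compatibly with endpoints,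
preserving the chosen directions), `φ` is `G`-invariant and direction-preserving,
identifies `T/G` with `B` (it is surjective and `G` is transitive on all fibers),
and `G` acts freely on the edges of `T` as soon as `B` has an edge. -/
structure GCover (G : Type) [Group G] (T B : FinDirGraph) where
  mapV : T.V → B.V
  mapE : T.E → B.E
  actV : G → T.V → T.V
  actE : G → T.E → T.E
  actV_one : ∀ v, actV 1 v = v
  actV_mul : ∀ g h v, actV (g * h) v = actV g (actV h v)
  actE_one : ∀ e, actE 1 e = e
  actE_mul : ∀ g h e, actE (g * h) e = actE g (actE h e)
  act_init : ∀ g e, T.init (actE g e) = actV g (T.init e)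
  act_term : ∀ g e, T.term (actE g e) = actV g (T.term e)
  map_init : ∀ e, B.init (mapE e) = mapV (T.init e)
  map_term : ∀ e, B.term (mapE e) = mapV (T.term e)
  map_actV : ∀ g v, mapV (actV g v) = mapV v
  map_actE : ∀ g e, mapE (actE g e) = mapE e
  surjV : Function.Surjective mapV
  surjE : Function.Surjective mapE
  transV : ∀ v w, mapV v = mapV w → ∃ g, actV g v = w
  transE : ∀ e f, mapE e = mapE f → ∃ g, actE g e = f
  freeE : Nonempty B.E → ∀ g e, actE g e = e → g = 1

namespace GCover

variable {G : Type} [Group G] {T B : FinDirGraph}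

/-- The net voltage set `NV_φ(γ, w₀)` of a closed walk with edge list `ℓ` at a
base vertex `w₀` of the cover: the set of `g ∈ G` such that some lift of the walk
starting at `w₀` ends at `g·w₀`. -/
def NVset (φ : GCover G T B) (ℓ : List (B.E × Bool)) (w₀ : T.V) : Set G :=
  {g | ∃ ℓ' : List (T.E × Bool),
    ℓ'.map (fun p => (φ.mapE p.1, p.2)) = ℓ ∧ T.WalkFrom w₀ ℓ' (φ.actV g w₀)}

/-- The net voltage class `NV_φ(γ)` of a closed walk `γ = (v₀, ℓ)`: the conjugacy
class in `G` of `NV_φ(γ, w₀)` for (any) `w₀` in the fiber over `v₀`. -/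
def NVclass (φ : GCover G T B) (v₀ : B.V) (ℓ : List (B.E × Bool)) : Set (Set G) :=
  {S | ∃ w₀ : T.V, φ.mapV w₀ = v₀ ∧
    ∃ g : G, S = (fun h => g * h * g⁻¹) '' φ.NVset ℓ w₀}

end GCover

/-- A `(θ, τ)`-equivalence between two `G`-covers. -/
structure GCoverEquiv {G : Type} [Group G] {T₁ B₁ T₂ B₂ : FinDirGraph}
    (φ₁ : GCover G T₁ B₁) (φ₂ : GCover G T₂ B₂)
    (θ : GraphIso B₁ B₂) (τ : G ≃* G) where
  iso : GraphIso T₁ T₂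
  commV : ∀ v, φ₂.mapV (iso.mapV v) = θ.mapV (φ₁.mapV v)
  commE : ∀ e, φ₂.mapE (iso.mapE e) = θ.mapE (φ₁.mapE e)
  equivV : ∀ (g : G) v, iso.mapV (φ₁.actV g v) = φ₂.actV (τ g) (iso.mapV v)
  equivE : ∀ (g : G) e, iso.mapE (φ₁.actE g e) = φ₂.actE (τ g) (iso.mapE e)

/-- The set of simple closed walks on a graph `Γ`: pairs `(v₀, ℓ)` of an initial
vertex and an edge list forming a closed walk whose vertices `v₀, …, v_{n-1}` are
pairwise distinct. -/
def SimpleClosedWalks (Γ : FinDirGraph) : Set (Γ.V × List (Γ.E × Bool)) :=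
  {p | Γ.WalkFrom p.1 p.2 p.1 ∧ ((Γ.vertList p.1 p.2).dropLast).Nodup}



section Aux

open Classical

attribute [local instance] Classical.propDecidable

@[simp] lemma FinDirGraph.walkFrom_nil (Γ : FinDirGraph) (v w : Γ.V) :
    Γ.WalkFrom v [] w ↔ v = w := Iff.rfl

@[simp] lemma FinDirGraph.walkFrom_cons (Γ : FinDirGraph) (v w : Γ.V) (p : Γ.E × Bool)
    (rest : List (Γ.E × Bool)) :
    Γ.WalkFrom v (p :: rest) w ↔ Γ.dsrc p.1 p.2 = v ∧ Γ.WalkFrom (Γ.ddst p.1 p.2) rest w :=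
  Iff.rfl

lemma GCover.actV_injective {G : Type} [Group G] {T B : FinDirGraph} (φ : GCover G T B) (g : G) :
    Function.Injective (φ.actV g) := by
  intro a b hab
  have := congrArg (φ.actV g⁻¹) hab
  rwa [← φ.actV_mul, ← φ.actV_mul, inv_mul_cancel, φ.actV_one, φ.actV_one] at this

lemma GraphIso.dichotomy {Γ₁ Γ₂ : FinDirGraph} (θ : GraphIso Γ₁ Γ₂) (e : Γ₁.E) :
    (Γ₂.init (θ.mapE e) = θ.mapV (Γ₁.init e) ∧ Γ₂.term (θ.mapE e) = θ.mapV (Γ₁.term e)) ∨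
    (Γ₂.init (θ.mapE e) = θ.mapV (Γ₁.term e) ∧ Γ₂.term (θ.mapE e) = θ.mapV (Γ₁.init e)) := by
  have h := θ.endpoints e
  have ha : Γ₂.init (θ.mapE e) ∈ θ.mapV '' {Γ₁.init e, Γ₁.term e} := by
    rw [← h]; exact Set.mem_insert _ _
  have hb : Γ₂.term (θ.mapE e) ∈ θ.mapV '' {Γ₁.init e, Γ₁.term e} := by
    rw [← h]; exact Set.mem_insert_iff.mpr (Or.inr rfl)
  have hc : θ.mapV (Γ₁.init e) ∈ ({Γ₂.init (θ.mapE e), Γ₂.term (θ.mapE e)} : Set Γ₂.V) := by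
    rw [h]; exact ⟨_, Set.mem_insert _ _, rfl⟩
  have hd : θ.mapV (Γ₁.term e) ∈ ({Γ₂.init (θ.mapE e), Γ₂.term (θ.mapE e)} : Set Γ₂.V) := by
    rw [h]; exact ⟨_, Set.mem_insert_iff.mpr (Or.inr rfl), rfl⟩
  simp only [Set.mem_image, Set.mem_insert_iff, Set.mem_singleton_iff] at ha hb hc hd
  obtain ⟨x, hx, hx'⟩ := ha
  obtain ⟨y, hy, hy'⟩ := hb
  rcases hx with rfl | rfl <;> rcases hy with rfl | rfl <;>
    first
      | exact Or.inl ⟨by grind, by grind⟩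
      | exact Or.inr ⟨by grind, by grind⟩
      | (rcases hc with hc | hc <;> rcases hd with hd | hd <;>
          first
            | exact Or.inl ⟨by grind, by grind⟩
            | exact Or.inr ⟨by grind, by grind⟩)

lemma FinDirGraph.walk_transport {Γ₁ Γ₂ : FinDirGraph} (fV : Γ₁.V → Γ₂.V) (fE : Γ₁.E → Γ₂.E)
    (σ : Γ₁.E → Bool → Bool) (hinj : Function.Injective fV)
    (hsrc : ∀ e s, Γ₂.dsrc (fE e) (σ e s) = fV (Γ₁.dsrc e s))
    (hdst : ∀ e s, Γ₂.ddst (fE e) (σ e s) = fV (Γ₁.ddst e s)) :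
    ∀ (ℓ : List (Γ₁.E × Bool)) (v w : Γ₁.V),
      Γ₂.WalkFrom (fV v) (ℓ.map fun p => (fE p.1, σ p.1 p.2)) (fV w) ↔ Γ₁.WalkFrom v ℓ w
  | [], v, w => by simp [hinj.eq_iff]
  | p :: rest, v, w => by
    simp only [List.map_cons, FinDirGraph.walkFrom_cons]
    rw [hsrc, hdst, hinj.eq_iff, FinDirGraph.walk_transport fV fE σ hinj hsrc hdst rest _ w]

lemma FinDirGraph.vertList_transport {Γ₁ Γ₂ : FinDirGraph} (fV : Γ₁.V → Γ₂.V) (fE : Γ₁.E → Γ₂.E)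
    (σ : Γ₁.E → Bool → Bool)
    (hdst : ∀ e s, Γ₂.ddst (fE e) (σ e s) = fV (Γ₁.ddst e s)) :
    ∀ (ℓ : List (Γ₁.E × Bool)) (v : Γ₁.V),
      Γ₂.vertList (fV v) (ℓ.map fun p => (fE p.1, σ p.1 p.2)) = (Γ₁.vertList v ℓ).map fV
  | [], v => by simp [FinDirGraph.vertList]
  | p :: rest, v => by
    simp only [List.map_cons, FinDirGraph.vertList]
    rw [hdst, FinDirGraph.vertList_transport fV fE σ hdst rest]

section MainAux

variable {G : Type} [Group G] {T₁ B₁ T₂ B₂ : FinDirGraph}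
  {φ₁ : GCover G T₁ B₁} {φ₂ : GCover G T₂ B₂} {θ : GraphIso B₁ B₂} {τ : G ≃* G}

/-- `θ̃` preserves the direction of the edge `e` of the cover. -/
def GCoverEquiv.Pres (E : GCoverEquiv φ₁ φ₂ θ τ) (e : T₁.E) : Prop :=
  T₂.init (E.iso.mapE e) = E.iso.mapV (T₁.init e) ∧
  T₂.term (E.iso.mapE e) = E.iso.mapV (T₁.term e)

lemma GCoverEquiv.pres_or_flip (E : GCoverEquiv φ₁ φ₂ θ τ) (e : T₁.E) :
    E.Pres e ∨
    (T₂.init (E.iso.mapE e) = E.iso.mapV (T₁.term e) ∧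
      T₂.term (E.iso.mapE e) = E.iso.mapV (T₁.init e)) :=
  E.iso.dichotomy e

lemma GCoverEquiv.pres_congr (E : GCoverEquiv φ₁ φ₂ θ τ) {e e' : T₁.E}
    (h : φ₁.mapE e = φ₁.mapE e') : (E.Pres e ↔ E.Pres e') := by
  obtain ⟨g, rfl⟩ := φ₁.transE e e' h
  unfold GCoverEquiv.Pres
  rw [E.equivE, φ₂.act_init, φ₂.act_term, φ₁.act_init, φ₁.act_term, E.equivV, E.equivV,
    (φ₂.actV_injective (τ g)).eq_iff, (φ₂.actV_injective (τ g)).eq_iff]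

/-- Sign-adjustment for lifted edges. -/
noncomputable def GCoverEquiv.sigUp (E : GCoverEquiv φ₁ φ₂ θ τ) (e : T₁.E) (s : Bool) : Bool :=
  if E.Pres e then s else !s

/-- Sign-adjustment for base edges. -/
noncomputable def GCoverEquiv.sigDown (E : GCoverEquiv φ₁ φ₂ θ τ) (f : B₁.E) (s : Bool) : Bool :=
  if E.Pres (φ₁.surjE f).choose then s else !s

lemma GCoverEquiv.sigUp_eq (E : GCoverEquiv φ₁ φ₂ θ τ) (e : T₁.E) :
    E.sigUp e = E.sigDown (φ₁.mapE e) := by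
  funext s
  unfold GCoverEquiv.sigUp GCoverEquiv.sigDown
  by_cases h : E.Pres e
  · rw [if_pos h, if_pos ((E.pres_congr (φ₁.surjE (φ₁.mapE e)).choose_spec).mpr h)]
  · rw [if_neg h, if_neg fun h' =>
      h ((E.pres_congr (φ₁.surjE (φ₁.mapE e)).choose_spec).mp h')]

lemma GCoverEquiv.sigUp_sigUp (E : GCoverEquiv φ₁ φ₂ θ τ) (e : T₁.E) (s : Bool) :
    E.sigUp e (E.sigUp e s) = s := by
  unfold GCoverEquiv.sigUp; by_cases h : E.Pres e <;> simp [h]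

lemma GCoverEquiv.sigDown_sigDown (E : GCoverEquiv φ₁ φ₂ θ τ) (f : B₁.E) (s : Bool) :
    E.sigDown f (E.sigDown f s) = s := by
  unfold GCoverEquiv.sigDown; by_cases h : E.Pres (φ₁.surjE f).choose <;> simp [h]

lemma GCoverEquiv.dsrcUp (E : GCoverEquiv φ₁ φ₂ θ τ) (e : T₁.E) (s : Bool) :
    T₂.dsrc (E.iso.mapE e) (E.sigUp e s) = E.iso.mapV (T₁.dsrc e s) := by
  unfold GCoverEquiv.sigUp
  by_cases h : E.Pres e
  · rw [if_pos h]; cases s <;> simp [FinDirGraph.dsrc, h.1, h.2]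
  · rcases E.pres_or_flip e with h' | h'
    · exact absurd h' h
    · rw [if_neg h]; cases s <;> simp [FinDirGraph.dsrc, h'.1, h'.2]

lemma GCoverEquiv.ddstUp (E : GCoverEquiv φ₁ φ₂ θ τ) (e : T₁.E) (s : Bool) :
    T₂.ddst (E.iso.mapE e) (E.sigUp e s) = E.iso.mapV (T₁.ddst e s) := by
  unfold GCoverEquiv.sigUp
  by_cases h : E.Pres e
  · rw [if_pos h]; cases s <;> simp [FinDirGraph.ddst, h.1, h.2]
  · rcases E.pres_or_flip e with h' | h'
    · exact absurd h' h
    · rw [if_neg h]; cases s <;> simp [FinDirGraph.ddst, h'.1, h'.2]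

lemma GCoverEquiv.init_down (E : GCoverEquiv φ₁ φ₂ θ τ) (e : T₁.E) :
    B₂.init (θ.mapE (φ₁.mapE e)) = φ₂.mapV (T₂.init (E.iso.mapE e)) := by
  rw [← E.commE, φ₂.map_init]

lemma GCoverEquiv.term_down (E : GCoverEquiv φ₁ φ₂ θ τ) (e : T₁.E) :
    B₂.term (θ.mapE (φ₁.mapE e)) = φ₂.mapV (T₂.term (E.iso.mapE e)) := by
  rw [← E.commE, φ₂.map_term]

lemma GCoverEquiv.initV_down (E : GCoverEquiv φ₁ φ₂ θ τ) (e : T₁.E) :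
    θ.mapV (B₁.init (φ₁.mapE e)) = φ₂.mapV (E.iso.mapV (T₁.init e)) := by
  rw [φ₁.map_init, ← E.commV]

lemma GCoverEquiv.termV_down (E : GCoverEquiv φ₁ φ₂ θ τ) (e : T₁.E) :
    θ.mapV (B₁.term (φ₁.mapE e)) = φ₂.mapV (E.iso.mapV (T₁.term e)) := by
  rw [φ₁.map_term, ← E.commV]

lemma GCoverEquiv.dsrcDown (E : GCoverEquiv φ₁ φ₂ θ τ) (f : B₁.E) (s : Bool) :
    B₂.dsrc (θ.mapE f) (E.sigDown f s) = θ.mapV (B₁.dsrc f s) := by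
  obtain ⟨e, he⟩ : ∃ e, φ₁.mapE e = f := φ₁.surjE f
  subst he
  rw [← E.sigUp_eq]
  unfold GCoverEquiv.sigUp
  by_cases h : E.Pres e
  · rw [if_pos h]
    cases s <;>
      simp [FinDirGraph.dsrc, E.init_down, E.term_down, E.initV_down, E.termV_down, h.1, h.2]
  · rcases E.pres_or_flip e with h' | h'
    · exact absurd h' h
    · rw [if_neg h]
      cases s <;>
        simp [FinDirGraph.dsrc, E.init_down, E.term_down, E.initV_down, E.termV_down, h'.1, h'.2]

lemma GCoverEquiv.ddstDown (E : GCoverEquiv φ₁ φ₂ θ τ) (f : B₁.E) (s : Bool) :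
    B₂.ddst (θ.mapE f) (E.sigDown f s) = θ.mapV (B₁.ddst f s) := by
  obtain ⟨e, he⟩ : ∃ e, φ₁.mapE e = f := φ₁.surjE f
  subst he
  rw [← E.sigUp_eq]
  unfold GCoverEquiv.sigUp
  by_cases h : E.Pres e
  · rw [if_pos h]
    cases s <;>
      simp [FinDirGraph.ddst, E.init_down, E.term_down, E.initV_down, E.termV_down, h.1, h.2]
  · rcases E.pres_or_flip e with h' | h'
    · exact absurd h' h
    · rw [if_neg h]
      cases s <;>
        simp [FinDirGraph.ddst, E.init_down, E.term_down, E.initV_down, E.termV_down, h'.1, h'.2]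

lemma GCoverEquiv.push_proj (E : GCoverEquiv φ₁ φ₂ θ τ) (ℓ' : List (T₁.E × Bool)) :
    (ℓ'.map fun p => (E.iso.mapE p.1, E.sigUp p.1 p.2)).map (fun p => (φ₂.mapE p.1, p.2)) =
      (ℓ'.map fun p => (φ₁.mapE p.1, p.2)).map fun p => (θ.mapE p.1, E.sigDown p.1 p.2) := by
  rw [List.map_map, List.map_map]
  refine List.map_congr_left fun p _ => ?_
  exact Prod.ext (E.commE p.1) (congrFun (E.sigUp_eq p.1) p.2)

lemma GCoverEquiv.pair_inj (E : GCoverEquiv φ₁ φ₂ θ τ) :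
    Function.Injective fun p : B₁.E × Bool => (θ.mapE p.1, E.sigDown p.1 p.2) := by
  intro a b hab
  simp only [Prod.mk.injEq] at hab
  obtain ⟨h1, h2⟩ := hab
  have h1' : a.1 = b.1 := θ.bijE.1 h1
  have h2' : a.2 = b.2 := by
    have := congrArg (E.sigDown a.1) h2
    rwa [E.sigDown_sigDown, h1', E.sigDown_sigDown] at this
  exact Prod.ext h1' h2'

lemma GCoverEquiv.NVset_eq (E : GCoverEquiv φ₁ φ₂ θ τ) (ℓ : List (B₁.E × Bool)) (w₀ : T₁.V) :
    φ₂.NVset (ℓ.map fun p => (θ.mapE p.1, E.sigDown p.1 p.2)) (E.iso.mapV w₀) =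
      (τ : G → G) '' φ₁.NVset ℓ w₀ := by
  have injV : Function.Injective E.iso.mapV := E.iso.bijV.1
  set gE := (Equiv.ofBijective E.iso.mapE E.iso.bijE).symm with hgE
  ext h
  constructor
  · rintro ⟨m', hproj, hwalk⟩
    set ℓ' : List (T₁.E × Bool) :=
      m'.map fun q => (gE q.1, E.sigUp (gE q.1) q.2) with hℓ'
    have hm' : m' = ℓ'.map fun p => (E.iso.mapE p.1, E.sigUp p.1 p.2) := by
      rw [hℓ', List.map_map]
      refine ((List.map_congr_left fun q _ => ?_).trans (List.map_id m')).symm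
      simp only [Function.comp, id]
      refine Prod.ext ?_ ?_
      · exact Equiv.ofBijective_apply_symm_apply _ E.iso.bijE q.1
      · exact E.sigUp_sigUp (gE q.1) q.2
    have hproj' : ℓ'.map (fun p => (φ₁.mapE p.1, p.2)) = ℓ := by
      apply List.map_injective_iff.mpr E.pair_inj
      rw [← E.push_proj, ← hm', hproj]
    refine ⟨τ.symm h, ⟨ℓ', hproj', ?_⟩, by simp⟩
    have hend : φ₂.actV h (E.iso.mapV w₀) = E.iso.mapV (φ₁.actV (τ.symm h) w₀) := by
      rw [E.equivV, MulEquiv.apply_symm_apply]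
    rw [hm', hend] at hwalk
    exact (FinDirGraph.walk_transport E.iso.mapV E.iso.mapE E.sigUp injV E.dsrcUp E.ddstUp
      ℓ' w₀ _).mp hwalk
  · rintro ⟨g, ⟨ℓ', hproj, hwalk⟩, rfl⟩
    refine ⟨ℓ'.map fun p => (E.iso.mapE p.1, E.sigUp p.1 p.2), ?_, ?_⟩
    · rw [E.push_proj, hproj]
    · rw [← E.equivV]
      exact (FinDirGraph.walk_transport E.iso.mapV E.iso.mapE E.sigUp injV E.dsrcUp E.ddstUp
        ℓ' w₀ _).mpr hwalk

lemma GCoverEquiv.NVclass_eq (E : GCoverEquiv φ₁ φ₂ θ τ) (v : B₁.V) (ℓ : List (B₁.E × Bool)) :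
    (fun S : Set G => (τ : G → G) '' S) '' φ₁.NVclass v ℓ =
      φ₂.NVclass (θ.mapV v) (ℓ.map fun p => (θ.mapE p.1, E.sigDown p.1 p.2)) := by
  ext S
  simp only [Set.mem_image, GCover.NVclass, Set.mem_setOf_eq]
  constructor
  · rintro ⟨_, ⟨w₀, hw₀, g, rfl⟩, rfl⟩
    refine ⟨E.iso.mapV w₀, by rw [E.commV, hw₀], τ g, ?_⟩
    rw [E.NVset_eq, Set.image_image, Set.image_image]
    exact Set.image_congr fun x _ => by simp [map_mul, map_inv]
  · rintro ⟨w₀', hw₀', g, rfl⟩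
    obtain ⟨w₀, rfl⟩ := E.iso.bijV.2 w₀'
    have hv : φ₁.mapV w₀ = v := θ.bijV.1 (by rw [← E.commV]; exact hw₀')
    refine ⟨(fun h => τ.symm g * h * (τ.symm g)⁻¹) '' φ₁.NVset ℓ w₀, ⟨w₀, hv, τ.symm g, rfl⟩, ?_⟩
    rw [E.NVset_eq, Set.image_image, Set.image_image]
    exact Set.image_congr fun x _ => by simp [map_mul, map_inv]

end MainAux

end Aux

/-- **Corollary 2.10.** If there is no bijection `Θ` between the sets of simple
closed walks of `B₁` and `B₂` with `τ(NV_{φ₁}(γ)) = NV_{φ₂}(Θ(γ))` for all simple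
closed walks `γ` on `B₁`, then there is no graph isomorphism `θ : B₁ → B₂` making
the covers `(θ, τ)`-equivalent. -/
theorem no_equiv_of_no_net_voltage_bijection {G : Type} [Group G] [Finite G]
    {T₁ B₁ T₂ B₂ : FinDirGraph}
    (φ₁ : GCover G T₁ B₁) (φ₂ : GCover G T₂ B₂) (τ : G ≃* G)
    (h : ¬ ∃ Θ : ↥(SimpleClosedWalks B₁) ≃ ↥(SimpleClosedWalks B₂),
        ∀ w : ↥(SimpleClosedWalks B₁),
          (fun S : Set G => (τ : G → G) '' S) '' φ₁.NVclass w.1.1 w.1.2 =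
            φ₂.NVclass (Θ w).1.1 (Θ w).1.2) :
    ¬ ∃ θ : GraphIso B₁ B₂, Nonempty (GCoverEquiv φ₁ φ₂ θ τ) := by
  rintro ⟨θ, ⟨E⟩⟩
  apply h
  have injV : Function.Injective θ.mapV := θ.bijV.1
  set eV := Equiv.ofBijective θ.mapV θ.bijV with heV
  set eE := Equiv.ofBijective θ.mapE θ.bijE with heE
  set push : B₁.V × List (B₁.E × Bool) → B₂.V × List (B₂.E × Bool) :=
    fun p => (θ.mapV p.1, p.2.map fun q => (θ.mapE q.1, E.sigDown q.1 q.2)) with hpush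
  have mem_push : ∀ p, push p ∈ SimpleClosedWalks B₂ ↔ p ∈ SimpleClosedWalks B₁ := by
    intro p
    simp only [SimpleClosedWalks, Set.mem_setOf_eq, hpush]
    rw [FinDirGraph.walk_transport θ.mapV θ.mapE E.sigDown injV E.dsrcDown E.ddstDown p.2 p.1 p.1,
      FinDirGraph.vertList_transport θ.mapV θ.mapE E.sigDown E.ddstDown p.2 p.1,
      ← List.map_dropLast, List.nodup_map_iff injV]
  set pull : B₂.V × List (B₂.E × Bool) → B₁.V × List (B₁.E × Bool) :=
    fun p => (eV.symm p.1, p.2.map fun q => (eE.symm q.1, E.sigDown (eE.symm q.1) q.2)) with hpull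
  have push_pull : ∀ p, push (pull p) = p := by
    intro p
    simp only [hpush, hpull]
    refine Prod.ext (Equiv.ofBijective_apply_symm_apply _ θ.bijV p.1) ?_
    show (p.2.map _).map _ = p.2
    rw [List.map_map]
    refine (List.map_congr_left fun q _ => ?_).trans (List.map_id p.2)
    simp only [Function.comp]
    refine Prod.ext (Equiv.ofBijective_apply_symm_apply _ θ.bijE q.1) (E.sigDown_sigDown _ q.2)
  have push_inj : Function.Injective push := by
    intro a b hab
    simp only [hpush, Prod.mk.injEq] at hab
    exact Prod.ext (injV hab.1) (List.map_injective_iff.mpr E.pair_inj hab.2)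
  refine ⟨Equiv.ofBijective (fun w => ⟨push w.1, (mem_push w.1).mpr w.2⟩)
    ⟨fun a b hab => Subtype.ext (push_inj (congrArg Subtype.val hab)), fun w =>
      ⟨⟨pull w.1, (mem_push (pull w.1)).mp (by rw [push_pull]; exact w.2)⟩,
        Subtype.ext (push_pull w.1)⟩⟩, fun w => ?_⟩
  exact E.NVclass_eq w.1.1 w.1.2
end

section
/- Let n ≥ 1, let μ₁, …, μₙ be positive integers with gcd(μ₁, …, μₙ) = 1, and let a ∈ ℂ with a ≠ 0. Then the set V := {(c₁, …, cₙ) ∈ ℂⁿ : c_j ≠ 0 for all j, c_j ≠ c_{j'} whenever j ≠ j', and c₁^{μ₁} ⋯ cₙ^{μₙ} = a}, equipped with the subspace topology of ℂⁿ, is nonempty and connected. -/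
lemma finset_gcd_bezout {α : Type*} [DecidableEq α] (s : Finset α) (μ : α → ℕ) :
    ∃ k : α → ℤ, ∑ j ∈ s, k j * μ j = ((s.gcd μ : ℕ) : ℤ) := by
  induction s using Finset.induction_on with
  | empty => exact ⟨0, by simp⟩
  | insert _ _ ha ih =>
    rename_i a s
    obtain ⟨k, hk⟩ := ih
    refine ⟨fun j => if j = a then Nat.gcdA (μ a) (s.gcd μ) else Nat.gcdB (μ a) (s.gcd μ) * k j, ?_⟩
    rw [Finset.sum_insert ha, Finset.gcd_insert]
    have h1 : ∑ j ∈ s, (if j = a then Nat.gcdA (μ a) (s.gcd μ) else Nat.gcdB (μ a) (s.gcd μ) * k j) * μ j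
        = Nat.gcdB (μ a) (s.gcd μ) * ∑ j ∈ s, k j * μ j := by
      rw [Finset.mul_sum]
      refine Finset.sum_congr rfl fun j hj => ?_
      rw [if_neg (by rintro rfl; exact ha hj), mul_assoc]
    simp only [eq_self_iff_true]
    rw [h1, hk, if_true]
    have : gcd (μ a) (s.gcd μ) = Nat.gcd (μ a) (s.gcd μ) := rfl
    rw [this, Nat.gcd_eq_gcd_ab]
    ring

/-- The set `V = {(c₁, …, cₙ) ∈ (ℂ^×)ⁿ : the c_j are pairwise distinct and
c₁^{μ₁} ⋯ cₙ^{μₙ} = a}` (for `a ≠ 0`, `μ_j > 0` and `gcd(μ₁, …, μₙ) = 1`, `n ≥ 1`)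
is nonempty and connected. -/
theorem connected_fiber_of_monomial_distinct {n : ℕ} (hn : 1 ≤ n) (μ : Fin n → ℕ)
    (hμ : ∀ j, 0 < μ j) (hgcd : Finset.univ.gcd μ = 1) (a : ℂ) (ha : a ≠ 0) :
    IsConnected {c : Fin n → ℂ |
      (∀ j, c j ≠ 0) ∧ (∀ j j', j ≠ j' → c j ≠ c j') ∧ ∏ j, c j ^ μ j = a} := by
  classical
  have hne : Nonempty (Fin n) := ⟨⟨0, hn⟩⟩
  obtain ⟨k, hk⟩ := finset_gcd_bezout Finset.univ μ
  rw [hgcd] at hk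
  have hkC : ∑ j, (k j : ℂ) * (μ j : ℂ) = 1 := by
    have := congrArg (Int.cast : ℤ → ℂ) hk
    push_cast at this
    exact this
  set c2 : ℂ := 2 * Real.pi * Complex.I with hc2
  have hexp1 : ∀ m' : ℤ, Complex.exp ((m' : ℂ) * c2) = 1 := fun m' =>
    Complex.exp_int_mul_two_pi_mul_I m'
  set L : ℂ := Complex.log a with hLdef
  have hL : Complex.exp L = a := Complex.exp_log ha
  set F : (Fin n → ℂ) → (Fin n → ℂ) := fun z j => Complex.exp (z j) with hF
  set G : Set (Fin n → ℂ) := {z | (∑ j, (μ j : ℂ) * z j = L) ∧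
      ∀ j j', j ≠ j' → Complex.exp (z j) ≠ Complex.exp (z j')} with hGdef
  have hprod : ∀ z : Fin n → ℂ,
      ∏ j, Complex.exp (z j) ^ μ j = Complex.exp (∑ j, (μ j : ℂ) * z j) := by
    intro z
    rw [Complex.exp_sum]
    exact Finset.prod_congr rfl fun j _ => (Complex.exp_nat_mul (z j) (μ j)).symm
  -- the set equals F '' G
  have himg : {c : Fin n → ℂ |
      (∀ j, c j ≠ 0) ∧ (∀ j j', j ≠ j' → c j ≠ c j') ∧ ∏ j, c j ^ μ j = a} = F '' G := by
    ext c
    constructor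
    · rintro ⟨hc0, hcd, hcp⟩
      set z : Fin n → ℂ := fun j => Complex.log (c j) with hz
      have hez : ∀ j, Complex.exp (z j) = c j := fun j => Complex.exp_log (hc0 j)
      have heq : Complex.exp (∑ j, (μ j : ℂ) * z j) = Complex.exp L := by
        rw [← hprod z]
        calc ∏ j, Complex.exp (z j) ^ μ j = ∏ j, c j ^ μ j :=
              Finset.prod_congr rfl fun j _ => by rw [hez]
          _ = a := hcp
          _ = Complex.exp L := hL.symm
      obtain ⟨m, hm⟩ := Complex.exp_eq_exp_iff_exists_int.mp heq
      set z' : Fin n → ℂ := fun j => z j - ((m : ℂ) * (k j : ℂ)) * c2 with hz'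
      have hfix : ∀ j, Complex.exp (z' j) = c j := by
        intro j
        rw [hz']
        simp only []
        rw [Complex.exp_sub, hez j,
          show ((m : ℂ) * (k j : ℂ)) * c2 = ((m * k j : ℤ) : ℂ) * c2 by push_cast; ring,
          hexp1, div_one]
      refine ⟨z', ⟨?_, ?_⟩, funext fun j => hfix j⟩
      · have hsum : ∑ j, (μ j : ℂ) * z' j
            = (∑ j, (μ j : ℂ) * z j) - (m : ℂ) * c2 * ∑ j, (k j : ℂ) * (μ j : ℂ) := by
          rw [Finset.mul_sum, ← Finset.sum_sub_distrib]
          exact Finset.sum_congr rfl fun j _ => by rw [hz']; ring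
        rw [hsum, hkC, hm]
        ring
      · intro j j' hjj
        rw [hfix j, hfix j']
        exact hcd j j' hjj
    · rintro ⟨z, ⟨hz1, hz2⟩, rfl⟩
      exact ⟨fun j => Complex.exp_ne_zero _, hz2, by rw [hF]; simp only []; rw [hprod, hz1, hL]⟩
  -- base point
  set Nc : ℂ := ∑ j, (μ j : ℂ) with hNc
  have hNc0 : Nc ≠ 0 := by
    rw [hNc, show (∑ j, (μ j : ℂ)) = ((∑ j, μ j : ℕ) : ℂ) by push_cast; rfl]
    exact Nat.cast_ne_zero.mpr (Finset.sum_pos (fun j _ => hμ j) Finset.univ_nonempty).ne'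
  set S : ℂ := ∑ i, (μ i : ℂ) * ((i : ℕ) : ℂ) with hS
  set z₀ : Fin n → ℂ := fun j => (L - S) / Nc + ((j : ℕ) : ℂ) with hz₀
  have hdistinct : ∀ (u : Fin n → ℂ), (∀ j j', u j - u j' = ((j : ℕ) : ℂ) - ((j' : ℕ) : ℂ)) →
      ∀ j j', j ≠ j' → Complex.exp (u j) ≠ Complex.exp (u j') := by
    intro u hu j j' hjj hexp
    obtain ⟨m, hm⟩ := Complex.exp_eq_exp_iff_exists_int.mp hexp
    have hdiff : ((j : ℕ) : ℂ) - ((j' : ℕ) : ℂ) = (m : ℂ) * c2 := by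
      rw [hc2, ← hu j j']; linear_combination hm
    have him : (0 : ℝ) = (m : ℝ) * (2 * Real.pi) := by
      have := congrArg Complex.im hdiff
      simpa [hc2, Complex.mul_im] using this
    have hm0 : m = 0 := by
      have hπ : (2 : ℝ) * Real.pi ≠ 0 := by positivity
      have := mul_eq_zero.mp him.symm
      rcases this with h | h
      · exact_mod_cast h
      · exact absurd h hπ
    rw [hm0] at hdiff
    simp only [Int.cast_zero, zero_mul, sub_eq_zero] at hdiff
    exact hjj (Fin.val_injective (Nat.cast_injective hdiff))
  have hz₀sub : ∀ j j', z₀ j - z₀ j' = ((j : ℕ) : ℂ) - ((j' : ℕ) : ℂ) := by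
    intro j j'; rw [hz₀]; ring
  have hz₀sum : ∑ j, (μ j : ℂ) * z₀ j = L := by
    have : ∑ j, (μ j : ℂ) * z₀ j = (∑ j, (μ j : ℂ)) * ((L - S) / Nc) + S := by
      rw [hS, Finset.sum_mul, ← Finset.sum_add_distrib]
      exact Finset.sum_congr rfl fun j _ => by rw [hz₀]; ring
    rw [this, ← hNc, mul_div_cancel₀ _ hNc0]
    ring
  have hz₀G : z₀ ∈ G := ⟨hz₀sum, hdistinct z₀ hz₀sub⟩
  -- path connectedness of G
  have hGpc : IsPathConnected G := by
    refine ⟨z₀, hz₀G, ?_⟩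
    intro y hy
    obtain ⟨hy1, hy2⟩ := hy
    set γ : ℂ → (Fin n → ℂ) := fun w j => z₀ j + w * (y j - z₀ j) with hγ
    have hγ0 : γ 0 = z₀ := by funext j; rw [hγ]; ring
    have hγ1 : γ 1 = y := by funext j; rw [hγ]; ring
    have hγH : ∀ w, ∑ j, (μ j : ℂ) * γ w j = L := by
      intro w
      have : ∑ j, (μ j : ℂ) * γ w j
          = (1 - w) * (∑ j, (μ j : ℂ) * z₀ j) + w * (∑ j, (μ j : ℂ) * y j) := by
        rw [Finset.mul_sum, Finset.mul_sum, ← Finset.sum_add_distrib]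
        exact Finset.sum_congr rfl fun j _ => by rw [hγ]; ring
      rw [this, hz₀sum, hy1]; ring
    set B : Set ℂ := {w | ∃ j j', j ≠ j' ∧ Complex.exp (γ w j) = Complex.exp (γ w j')} with hB
    have hgood : ∀ w ∉ B, γ w ∈ G := by
      intro w hw
      exact ⟨hγH w, fun j j' hjj hexp => hw ⟨j, j', hjj, hexp⟩⟩
    have hBc : B.Countable := by
      have hsub : B ⊆ ⋃ p : Fin n × Fin n × ℤ, {w : ℂ | p.1 ≠ p.2.1 ∧
          γ w p.1 = γ w p.2.1 + ((p.2.2 : ℂ)) * c2} := by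
        rintro w ⟨j, j', hjj, hexp⟩
        obtain ⟨m, hm⟩ := Complex.exp_eq_exp_iff_exists_int.mp hexp
        exact Set.mem_iUnion.mpr ⟨⟨j, j', m⟩, hjj, hm⟩
      refine Set.Countable.mono hsub (Set.countable_iUnion ?_)
      rintro ⟨j, j', m⟩
      by_cases hβ : (y j - z₀ j) - (y j' - z₀ j') = 0
      · convert Set.countable_empty
        ext w
        simp only [Set.mem_setOf_eq, Set.mem_empty_iff_false, iff_false, not_and]
        intro hjj heq
        refine hz₀G.2 j j' hjj (Complex.exp_eq_exp_iff_exists_int.mpr ⟨m, ?_⟩)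
        rw [hγ] at heq
        simp only [] at heq
        linear_combination heq - w * hβ
      · apply Set.Subsingleton.countable
        rintro w1 ⟨_, h1⟩ w2 ⟨_, h2⟩
        rw [hγ] at h1 h2
        simp only [] at h1 h2
        have hww : (w1 - w2) * ((y j - z₀ j) - (y j' - z₀ j')) = 0 := by
          linear_combination h1 - h2
        rcases mul_eq_zero.mp hww with h | h
        · exact sub_eq_zero.mp h
        · exact absurd h hβ
    have h0B : (0 : ℂ) ∉ B := by
      intro h
      obtain ⟨j, j', hjj, hexp⟩ := h
      rw [hγ0] at hexp
      exact hz₀G.2 j j' hjj hexp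
    have h1B : (1 : ℂ) ∉ B := by
      intro h
      obtain ⟨j, j', hjj, hexp⟩ := h
      rw [hγ1] at hexp
      exact hy2 j j' hjj hexp
    have hpc : IsPathConnected (Bᶜ) :=
      hBc.isPathConnected_compl_of_one_lt_rank (by simp [Complex.rank_real_complex])
    obtain ⟨p, hp⟩ := hpc.joinedIn 0 h0B 1 h1B
    have hγc : Continuous γ := by
      apply continuous_pi
      intro j
      exact continuous_const.add (continuous_id.mul continuous_const)
    refine ⟨(p.map hγc).cast hγ0.symm hγ1.symm, fun t => ?_⟩
    simp only [Path.cast_coe, Path.map_coe, Function.comp_apply]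
    exact hgood (p t) (hp t)
  rw [himg]
  have hFc : Continuous F := continuous_pi fun j => Complex.continuous_exp.comp (continuous_apply j)
  exact (hGpc.image hFc).isConnected
end
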